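/- Every uncountable Borel subset of a Polish space contains a nonempty perfect subset; consequently every Borel set is either countable or has the cardinality of the continuum (Perfect Set Theorem for Borel sets). -/
import Mathlib


open Cardinal MeasureTheory

private lemma cantor_tendsto (a : ℕ → Bool) :
    Filter.Tendsto (fun n => Function.update a n (!a n)) Filter.atTop (nhds a) := by
  rw [tendsto_pi_nhds]
  intro i
  apply Filter.Tendsto.congr' (f₁ := fun _ => a i)
  · filter_upwards [Filter.eventually_gt_atTop i] with n hn
    rw [Function.update_of_ne (by omega)]
  · exact tendsto_const_nhds

private lemma key_inj {X : Type*} [TopologicalSpace X] [PolishSpace X]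
    [MeasurableSpace X] [BorelSpace X] (A : Set X) (hA : MeasurableSet A)
    (hc : ¬ A.Countable) :
    ∃ f : (ℕ → Bool) → X, Set.range f ⊆ A ∧ Continuous f ∧ Function.Injective f := by
  obtain ⟨t, hle, ht, hclosed, -⟩ := hA.isClopenable
  obtain ⟨f, hrange, hcont, hinj⟩ :=
    @IsClosed.exists_nat_bool_injection_of_not_countable X t ht A hclosed hc
  refine ⟨f, hrange, continuous_def.2 fun s hs => ?_, hinj⟩
  exact (@continuous_def _ _ _ t f).1 hcont s (hs.mono hle)

theorem perfect_range {X : Type*} [TopologicalSpace X] [T2Space X]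
    {f : (ℕ → Bool) → X} (hcont : Continuous f) (hinj : Function.Injective f) :
    Perfect (Set.range f) := by
  constructor
  · exact (isCompact_range hcont).isClosed
  · rintro x ⟨a, rfl⟩
    rw [accPt_iff_nhds]
    intro U hU
    have hU' : f ⁻¹' U ∈ nhds a := hcont.continuousAt.preimage_mem_nhds hU
    have := (cantor_tendsto a).eventually_mem hU'
    obtain ⟨n, hn⟩ := this.exists
    refine ⟨f (Function.update a n (!a n)), ⟨hn, ⟨_, rfl⟩⟩, ?_⟩
    intro h
    have := hinj h
    have : Function.update a n (!a n) n = a n := by rw [this]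
    simp [Function.update_self] at this

/-- **Perfect Set Theorem for Borel sets.** Every uncountable Borel subset of
a Polish space contains a nonempty perfect subset; consequently every Borel
set is either countable or has the cardinality of the continuum. -/
theorem perfect_set_theorem_borel {X : Type*} [TopologicalSpace X]
    [PolishSpace X] (A : Set X) (hA : MeasurableSet[borel X] A) :
    (¬ A.Countable → ∃ P : Set X, Perfect P ∧ P.Nonempty ∧ P ⊆ A) ∧
    (A.Countable ∨ Cardinal.mk A = Cardinal.continuum) := by
  letI m : MeasurableSpace X := borel X
  haveI : BorelSpace X := ⟨rfl⟩
  have key : ¬ A.Countable →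
      ∃ f : (ℕ → Bool) → X, Set.range f ⊆ A ∧ Continuous f ∧ Function.Injective f :=
    fun hc => key_inj A hA hc
  constructor
  · intro hc
    obtain ⟨f, hrange, hcont, hinj⟩ := key hc
    exact ⟨Set.range f, perfect_range hcont hinj, Set.range_nonempty f, hrange⟩
  · by_cases hc : A.Countable
    · exact Or.inl hc
    · right
      obtain ⟨f, hrange, hcont, hinj⟩ := key hc
      have hcantor : Cardinal.mk (ULift.{u_1} (ℕ → Bool)) = Cardinal.continuum := by
        rw [Cardinal.mk_uLift, Cardinal.mk_arrow]
        simp [Cardinal.two_power_aleph0]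
      apply le_antisymm
      · obtain ⟨g, -, ginj⟩ :=
          MeasurableSpace.measurable_injection_nat_bool_of_countablySeparated X
        calc Cardinal.mk A ≤ Cardinal.mk X := Cardinal.mk_subtype_le _
          _ ≤ Cardinal.mk (ULift.{u_1} (ℕ → Bool)) :=
            Cardinal.mk_le_of_injective (f := fun x => ULift.up (g x))
              (fun x y h => ginj (congrArg ULift.down h))
          _ = Cardinal.continuum := hcantor
      · rw [← hcantor]
        refine Cardinal.mk_le_of_injective
          (f := fun b => (⟨f b.down, hrange ⟨b.down, rfl⟩⟩ : A)) ?_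
        intro x y hxy
        exact ULift.ext _ _ (hinj (congrArg Subtype.val hxy))
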